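/- Let X and Y be real normed spaces with X nontrivial, and let T : X → Y be a bounded linear operator. For x ∈ X with ‖x‖ = 1, x ∈ m_T if and only if there exist semi-inner-products [·,·]_X on X and [·,·]_Y on Y (each generating the respective norm) such that [Ty, Tx]_Y = m(T)² [y, x]_X for every y ∈ X. -/

import Mathlib

/-- A semi-inner-product generating the norm on a real normed space. -/
def IsSemiInnerProduct {X : Type*} [NormedAddCommGroup X] [NormedSpace ℝ X]
    (p : X → X → ℝ) : Prop :=
  (∀ x y z : X, p (x + y) z = p x z + p y z) ∧
  (∀ (l : ℝ) (x y : X), p (l • x) y = l * p x y) ∧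
  (∀ (l : ℝ) (x y : X), p x (l • y) = l * p x y) ∧
  (∀ x : X, p x x = ‖x‖ ^ 2) ∧
  (∀ x y : X, (p x y) ^ 2 ≤ p x x * p y y)

section Aux

variable {X : Type*} [NormedAddCommGroup X] [NormedSpace ℝ X]

def raySetoid (X : Type*) [AddCommGroup X] [Module ℝ X] : Setoid X where
  r y z := ∃ c : ℝ, c ≠ 0 ∧ z = c • y
  iseqv := by
    refine ⟨fun y => ⟨1, one_ne_zero, (one_smul ℝ y).symm⟩, ?_, ?_⟩
    · rintro a b ⟨c, hc, rfl⟩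
      exact ⟨c⁻¹, inv_ne_zero hc, by rw [smul_smul, inv_mul_cancel₀ hc, one_smul]⟩
    · rintro a b d ⟨c, hc, rfl⟩ ⟨c', hc', rfl⟩
      exact ⟨c' * c, mul_ne_zero hc' hc, by rw [smul_smul]⟩

noncomputable def rayRep (y : X) : X := (Quotient.mk (raySetoid X) y).out

lemma rayRep_spec (y : X) : ∃ c : ℝ, c ≠ 0 ∧ y = c • rayRep y :=
  Quotient.mk_out (s := raySetoid X) y

noncomputable def rayCoef (y : X) : ℝ := (rayRep_spec y).choose

lemma rayCoef_spec (y : X) : rayCoef y ≠ 0 ∧ y = rayCoef y • rayRep y :=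
  (rayRep_spec y).choose_spec

lemma rayRep_smul {l : ℝ} (hl : l ≠ 0) (y : X) : rayRep (l • y) = rayRep y := by
  unfold rayRep
  congr 1
  exact (Quotient.sound (show (raySetoid X).r y (l • y) from ⟨l, hl, rfl⟩)).symm

lemma rayRep_ne {y : X} (hy : y ≠ 0) : rayRep y ≠ 0 := by
  intro h
  obtain ⟨c, hc, hcy⟩ := rayRep_spec y
  rw [h, smul_zero] at hcy
  exact hy hcy

lemma rayCoef_smul {l : ℝ} (hl : l ≠ 0) {y : X} (hy : y ≠ 0) :
    rayCoef (l • y) = l * rayCoef y := by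
  have h1 := rayCoef_spec (l • y)
  have h2 := rayCoef_spec y
  have hr : rayRep (l • y) = rayRep y := rayRep_smul hl y
  apply smul_left_injective ℝ (rayRep_ne hy)
  show rayCoef (l • y) • rayRep y = (l * rayCoef y) • rayRep y
  rw [← hr, ← h1.2, hr, ← smul_smul, ← h2.2]

open Classical in
noncomputable def dualAt (v : X) : X →L[ℝ] ℝ :=
  if hv : v = 0 then 0 else (exists_dual_vector ℝ v (norm_ne_zero_iff.mpr hv)).choose

lemma dualAt_norm {v : X} (hv : v ≠ 0) : ‖dualAt v‖ = 1 := by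
  rw [dualAt, dif_neg hv]
  exact (exists_dual_vector ℝ v (norm_ne_zero_iff.mpr hv)).choose_spec.1

lemma dualAt_self {v : X} (hv : v ≠ 0) : dualAt v v = ‖v‖ := by
  rw [dualAt, dif_neg hv]
  exact (exists_dual_vector ℝ v (norm_ne_zero_iff.mpr hv)).choose_spec.2

open Classical in
noncomputable def sipFun (x : X) (f : X →L[ℝ] ℝ) : X → (X →L[ℝ] ℝ) := fun y =>
  if h : ∃ c : ℝ, c ≠ 0 ∧ y = c • x then h.choose • f
  else if y = 0 then 0
  else (rayCoef y * ‖rayRep y‖) • dualAt (rayRep y)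

variable {x : X} (hx : x ≠ 0) {f : X →L[ℝ] ℝ}

lemma sipFun_smul_x (hx : x ≠ 0) {c : ℝ} (hc : c ≠ 0) : sipFun x f (c • x) = c • f := by
  have h : ∃ c' : ℝ, c' ≠ 0 ∧ c • x = c' • x := ⟨c, hc, rfl⟩
  rw [sipFun, dif_pos h]
  have : h.choose = c := by
    have := h.choose_spec.2
    exact smul_left_injective ℝ hx this.symm
  rw [this]

lemma sipFun_zero (hx : x ≠ 0) : sipFun x f (0 : X) = 0 := by
  have h : ¬ ∃ c : ℝ, c ≠ 0 ∧ (0 : X) = c • x := by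
    rintro ⟨c, hc, h0⟩
    exact hc (by simpa [smul_eq_zero, hx] using h0.symm)
  rw [sipFun, dif_neg h, if_pos rfl]

lemma sipFun_generic {y : X} (hy : y ≠ 0) (hns : ¬ ∃ c : ℝ, c ≠ 0 ∧ y = c • x) :
    sipFun x f y = (rayCoef y * ‖rayRep y‖) • dualAt (rayRep y) := by
  rw [sipFun, dif_neg hns, if_neg hy]

lemma sipFun_homog (hx : x ≠ 0) (l : ℝ) (y : X) :
    sipFun x f (l • y) = l • sipFun x f y := by
  rcases eq_or_ne l 0 with rfl | hl
  · rw [zero_smul, zero_smul, sipFun_zero hx]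
  rcases eq_or_ne y 0 with rfl | hy
  · rw [smul_zero, sipFun_zero hx, smul_zero]
  by_cases hs : ∃ c : ℝ, c ≠ 0 ∧ y = c • x
  · obtain ⟨c, hc, rfl⟩ := hs
    rw [smul_smul, sipFun_smul_x hx (mul_ne_zero hl hc), sipFun_smul_x hx hc, smul_smul]
  · have hns' : ¬ ∃ c : ℝ, c ≠ 0 ∧ l • y = c • x := by
      rintro ⟨c, hc, hcy⟩
      exact hs ⟨l⁻¹ * c, mul_ne_zero (inv_ne_zero hl) hc, by
        rw [← smul_smul, ← hcy, smul_smul, inv_mul_cancel₀ hl, one_smul]⟩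
    rw [sipFun_generic (smul_ne_zero hl hy) hns', sipFun_generic hy hs,
      rayRep_smul hl, rayCoef_smul hl hy, smul_smul, mul_assoc]

lemma sipFun_self (hx : x ≠ 0) (hfx : f x = ‖x‖ ^ 2) (y : X) :
    sipFun x f y y = ‖y‖ ^ 2 := by
  rcases eq_or_ne y 0 with rfl | hy
  · simp [sipFun_zero hx]
  by_cases hs : ∃ c : ℝ, c ≠ 0 ∧ y = c • x
  · obtain ⟨c, hc, rfl⟩ := hs
    rw [sipFun_smul_x hx hc]
    simp only [ContinuousLinearMap.smul_apply, map_smul, smul_eq_mul, hfx,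
      norm_smul, Real.norm_eq_abs]
    ring_nf
    rw [sq_abs]
    ring
  · rw [sipFun_generic hy hs]
    have hrne := rayRep_ne hy
    obtain ⟨hc0, hcy⟩ := rayCoef_spec y
    simp only [ContinuousLinearMap.smul_apply, smul_eq_mul]
    have happ : dualAt (rayRep y) y = rayCoef y * ‖rayRep y‖ := by
      calc dualAt (rayRep y) y = dualAt (rayRep y) (rayCoef y • rayRep y) := by rw [← hcy]
        _ = rayCoef y * ‖rayRep y‖ := by rw [map_smul, smul_eq_mul, dualAt_self hrne]
    have hny : ‖y‖ = |rayCoef y| * ‖rayRep y‖ := by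
      calc ‖y‖ = ‖rayCoef y • rayRep y‖ := by rw [← hcy]
        _ = |rayCoef y| * ‖rayRep y‖ := by rw [norm_smul, Real.norm_eq_abs]
    rw [happ, hny]
    ring_nf
    rw [sq_abs]
    ring

lemma sipFun_bound (hx : x ≠ 0) (hf : ∀ z, |f z| ≤ ‖x‖ * ‖z‖) (y z : X) :
    |sipFun x f y z| ≤ ‖y‖ * ‖z‖ := by
  rcases eq_or_ne y 0 with rfl | hy
  · simp [sipFun_zero hx]
  by_cases hs : ∃ c : ℝ, c ≠ 0 ∧ y = c • x
  · obtain ⟨c, hc, rfl⟩ := hs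
    rw [sipFun_smul_x hx hc]
    simp only [ContinuousLinearMap.smul_apply, smul_eq_mul, abs_mul]
    rw [norm_smul, Real.norm_eq_abs, mul_assoc]
    exact mul_le_mul_of_nonneg_left (hf z) (abs_nonneg c)
  · rw [sipFun_generic hy hs]
    have hrne := rayRep_ne hy
    obtain ⟨hc0, hcy⟩ := rayCoef_spec y
    simp only [ContinuousLinearMap.smul_apply, smul_eq_mul, abs_mul]
    have h1 : |dualAt (rayRep y) z| ≤ ‖z‖ := by
      calc |dualAt (rayRep y) z| ≤ ‖dualAt (rayRep y)‖ * ‖z‖ :=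
            (dualAt (rayRep y)).le_opNorm z
        _ = ‖z‖ := by rw [dualAt_norm hrne, one_mul]
    have hny : ‖y‖ = |rayCoef y| * ‖rayRep y‖ := by
      calc ‖y‖ = ‖rayCoef y • rayRep y‖ := by rw [← hcy]
        _ = |rayCoef y| * ‖rayRep y‖ := by rw [norm_smul, Real.norm_eq_abs]
    have h2 : |‖rayRep y‖| = ‖rayRep y‖ := by simp
    rw [h2, hny]
    have h3 : ‖rayRep y‖ * |dualAt (rayRep y) z| ≤ ‖rayRep y‖ * ‖z‖ :=
      mul_le_mul_of_nonneg_left h1 (norm_nonneg (rayRep y))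
    calc |rayCoef y| * ‖rayRep y‖ * |dualAt (rayRep y) z|
        = |rayCoef y| * (‖rayRep y‖ * |dualAt (rayRep y) z|) := by ring
      _ ≤ |rayCoef y| * (‖rayRep y‖ * ‖z‖) := mul_le_mul_of_nonneg_left h3 (abs_nonneg _)
      _ = |rayCoef y| * ‖rayRep y‖ * ‖z‖ := by ring

lemma exists_sip_at (x : X) (hx : x ≠ 0) (f : X →L[ℝ] ℝ) (hfx : f x = ‖x‖ ^ 2)
    (hf : ∀ z, |f z| ≤ ‖x‖ * ‖z‖) :
    ∃ p : X → X → ℝ, IsSemiInnerProduct p ∧ ∀ z, p z x = f z := by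
  refine ⟨fun z y => sipFun x f y z, ⟨?_, ?_, ?_, ?_, ?_⟩, ?_⟩
  · intro a b z; exact map_add (sipFun x f z) a b
  · intro l a b; exact (sipFun x f b).map_smul l a
  · intro l a b
    show (sipFun x f (l • b)) a = l * (sipFun x f b) a
    rw [sipFun_homog hx]; rfl
  · intro a
    show (sipFun x f a) a = ‖a‖ ^ 2
    exact sipFun_self hx hfx a
  · intro a b
    have h1 := sipFun_bound hx hf b a
    have h2 : (sipFun x f b a) ^ 2 ≤ (‖b‖ * ‖a‖) ^ 2 := by
      rw [← sq_abs]
      exact pow_le_pow_left₀ (abs_nonneg _) h1 2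
    show (sipFun x f b) a ^ 2 ≤ (sipFun x f a) a * (sipFun x f b) b
    rw [sipFun_self hx hfx, sipFun_self hx hfx]
    calc (sipFun x f b a) ^ 2 ≤ (‖b‖ * ‖a‖) ^ 2 := h2
      _ = ‖a‖ ^ 2 * ‖b‖ ^ 2 := by ring
  · intro z
    have h1 : sipFun x f x = (1 : ℝ) • f := by
      have := sipFun_smul_x (f := f) hx one_ne_zero
      rwa [one_smul] at this
    show (sipFun x f x) z = f z
    rw [h1, one_smul]

lemma exists_sip (X : Type*) [NormedAddCommGroup X] [NormedSpace ℝ X] :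
    ∃ p : X → X → ℝ, IsSemiInnerProduct p := by
  by_cases h : ∃ v : X, v ≠ 0
  · obtain ⟨v, hv⟩ := h
    obtain ⟨g, hg1, hg2⟩ := exists_dual_vector ℝ v (norm_ne_zero_iff.mpr hv)
    obtain ⟨p, hp, -⟩ := exists_sip_at v hv (‖v‖ • g)
      (by simp [hg2]; ring)
      (by intro z
          simp only [ContinuousLinearMap.smul_apply, smul_eq_mul, abs_mul, abs_norm]
          have : |g z| ≤ ‖z‖ := by
            calc |g z| ≤ ‖g‖ * ‖z‖ := g.le_opNorm z
              _ = ‖z‖ := by rw [hg1, one_mul]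
          exact mul_le_mul_of_nonneg_left this (norm_nonneg _))
    exact ⟨p, hp⟩
  · push_neg at h
    refine ⟨fun _ _ => 0, ?_, ?_, ?_, ?_, ?_⟩ <;> simp_all

lemma sip_zero_right {p : X → X → ℝ} (hp : IsSemiInnerProduct p) (z : X) :
    p z 0 = 0 := by
  have := hp.2.2.1 0 z 0
  simpa using this

end Aux

/-- The minimum norm of a bounded linear operator. -/
noncomputable def minNorm {X Y : Type*} [NormedAddCommGroup X] [NormedSpace ℝ X]
    [NormedAddCommGroup Y] [NormedSpace ℝ Y] (T : X →L[ℝ] Y) : ℝ :=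
  sInf {r : ℝ | ∃ x : X, ‖x‖ = 1 ∧ r = ‖T x‖}

theorem stmt_11 {X Y : Type*} [NormedAddCommGroup X] [NormedSpace ℝ X] [Nontrivial X]
    [NormedAddCommGroup Y] [NormedSpace ℝ Y]
    (T : X →L[ℝ] Y) (x : X) (hx : ‖x‖ = 1) :
    ‖T x‖ = minNorm T ↔
      ∃ (pX : X → X → ℝ) (pY : Y → Y → ℝ),
        IsSemiInnerProduct pX ∧ IsSemiInnerProduct pY ∧
        ∀ y : X, pY (T y) (T x) = (minNorm T) ^ 2 * pX y x := by
  set m := minNorm T with hmdef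
  have hSne : {r : ℝ | ∃ z : X, ‖z‖ = 1 ∧ r = ‖T z‖}.Nonempty := ⟨‖T x‖, x, hx, rfl⟩
  have hbdd : BddBelow {r : ℝ | ∃ z : X, ‖z‖ = 1 ∧ r = ‖T z‖} := by
    refine ⟨0, ?_⟩
    rintro r ⟨z, -, rfl⟩
    exact norm_nonneg _
  have hm0 : 0 ≤ m := by
    apply le_csInf hSne
    rintro r ⟨z, -, rfl⟩
    exact norm_nonneg _
  have hx0 : x ≠ 0 := by
    intro h; rw [h, norm_zero] at hx; exact one_ne_zero hx.symm
  have hmle : ∀ z : X, m * ‖z‖ ≤ ‖T z‖ := by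
    intro z
    rcases eq_or_ne z 0 with rfl | hz
    · simp
    · have hzn : ‖z‖ ≠ 0 := norm_ne_zero_iff.mpr hz
      have hu : ‖(‖z‖⁻¹ • z)‖ = 1 := by
        rw [norm_smul, norm_inv, norm_norm, inv_mul_cancel₀ hzn]
      have h1 : m ≤ ‖T (‖z‖⁻¹ • z)‖ := csInf_le hbdd ⟨‖z‖⁻¹ • z, hu, rfl⟩
      have h2 : ‖T (‖z‖⁻¹ • z)‖ = ‖z‖⁻¹ * ‖T z‖ := by
        rw [map_smul, norm_smul, norm_inv, norm_norm]
      rw [h2] at h1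
      have h3 := mul_le_mul_of_nonneg_right h1 (norm_nonneg z)
      rwa [inv_mul_eq_div, div_mul_cancel₀ _ hzn] at h3
  constructor
  · intro hTx
    rcases eq_or_lt_of_le hm0 with hmz | hmpos
    · -- m = 0 case
      obtain ⟨pX, hpX⟩ := exists_sip X
      obtain ⟨pY, hpY⟩ := exists_sip Y
      refine ⟨pX, pY, hpX, hpY, fun y => ?_⟩
      have hTx0 : T x = 0 := by
        rw [← norm_eq_zero, hTx, ← hmz]
      rw [hTx0, sip_zero_right hpY, ← hmz]
      ring
    · -- m > 0 case
      obtain ⟨f₀, hf₀n, hf₀x⟩ := exists_dual_vector ℝ x (norm_ne_zero_iff.mpr hx0)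
      have hf₀b : ∀ z : X, |f₀ z| ≤ ‖x‖ * ‖z‖ := by
        intro z
        rw [hx, one_mul]
        calc |f₀ z| ≤ ‖f₀‖ * ‖z‖ := f₀.le_opNorm z
          _ = ‖z‖ := by rw [hf₀n, one_mul]
      have hf₀x' : f₀ x = ‖x‖ ^ 2 := by rw [hf₀x, hx]; norm_num
      have hinj : Function.Injective (T.toLinearMap : X →ₗ[ℝ] Y) := by
        intro a b hab
        have hT : T (a - b) = 0 := by
          simp only [map_sub, sub_eq_zero]
          exact hab
        have := hmle (a - b)
        rw [hT, norm_zero] at this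
        have hab' : ‖a - b‖ ≤ 0 := by
          by_contra hcon
          push_neg at hcon
          nlinarith
        have : a - b = 0 := norm_le_zero_iff.mp hab'
        exact sub_eq_zero.mp this
      set e := LinearEquiv.ofInjective (T.toLinearMap : X →ₗ[ℝ] Y) hinj with he
      set lin : (LinearMap.range (T.toLinearMap : X →ₗ[ℝ] Y)) →ₗ[ℝ] ℝ :=
        ((m ^ 2) • (f₀ : X →ₗ[ℝ] ℝ)).comp e.symm.toLinearMap with hlin
      have hcoe : ∀ z : X, ((e z : LinearMap.range (T.toLinearMap : X →ₗ[ℝ] Y)) : Y) = T z := by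
        intro z
        rfl
      have hbound : ∀ w, ‖lin w‖ ≤ m * ‖w‖ := by
        intro w
        set z := e.symm w with hz
        have hw : (w : Y) = T z := by
          rw [hz, ← hcoe (e.symm w), LinearEquiv.apply_symm_apply]
        have hne : ‖w‖ = ‖T z‖ := by rw [← hw]; rfl
        have hlw : lin w = m ^ 2 * f₀ z := by
          simp only [hlin, LinearMap.coe_comp, Function.comp_apply, LinearMap.smul_apply,
            LinearEquiv.coe_toLinearMap, smul_eq_mul]
          rfl
        rw [hlw, hne]
        have h1 : |f₀ z| ≤ ‖z‖ := by
          have := hf₀b z; rwa [hx, one_mul] at this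
        have h2 : m * ‖z‖ ≤ ‖T z‖ := hmle z
        rw [Real.norm_eq_abs, abs_mul]
        have hm2 : |m ^ 2| = m ^ 2 := abs_of_nonneg (sq_nonneg m)
        rw [hm2]
        nlinarith [abs_nonneg (f₀ z), norm_nonneg z]
      set φ := LinearMap.mkContinuous lin m hbound with hφ
      have hφn : ‖φ‖ ≤ m := LinearMap.mkContinuous_norm_le lin hm0 hbound
      obtain ⟨g, hg1, hg2⟩ := exists_extension_norm_eq _ φ
      have hgT : ∀ z : X, g (T z) = m ^ 2 * f₀ z := by
        intro z
        have h1 : g ((e z : LinearMap.range (T.toLinearMap : X →ₗ[ℝ] Y)) : Y) = φ (e z) :=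
          hg1 (e z)
        rw [hcoe z] at h1
        rw [h1]
        have h2 : φ (e z) = lin (e z) := rfl
        rw [h2, hlin]
        simp only [LinearMap.coe_comp, Function.comp_apply, LinearEquiv.coe_toLinearMap,
          LinearMap.smul_apply, smul_eq_mul, LinearEquiv.symm_apply_apply]
        rfl
      have hTx0 : T x ≠ 0 := by
        intro h
        rw [h, norm_zero] at hTx
        rw [← hTx] at hmpos
        exact lt_irrefl 0 hmpos
      have hgTx : g (T x) = ‖T x‖ ^ 2 := by
        rw [hgT x, hf₀x, hx, hTx]; norm_num
      have hgb : ∀ w : Y, |g w| ≤ ‖T x‖ * ‖w‖ := by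
        intro w
        calc |g w| ≤ ‖g‖ * ‖w‖ := g.le_opNorm w
          _ ≤ m * ‖w‖ := by
              apply mul_le_mul_of_nonneg_right _ (norm_nonneg w)
              rw [hg2]; exact hφn
          _ = ‖T x‖ * ‖w‖ := by rw [hTx]
      obtain ⟨pX, hpX, hpXx⟩ := exists_sip_at x hx0 f₀ hf₀x' hf₀b
      obtain ⟨pY, hpY, hpYx⟩ := exists_sip_at (T x) hTx0 g hgTx hgb
      refine ⟨pX, pY, hpX, hpY, fun y => ?_⟩
      rw [hpYx (T y), hgT y, hpXx y]
  · rintro ⟨pX, pY, hpX, hpY, h⟩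
    have h1 := h x
    rw [hpY.2.2.2.1 (T x), hpX.2.2.2.1 x, hx] at h1
    have h2 : ‖T x‖ ^ 2 = m ^ 2 := by rw [h1]; ring
    nlinarith [norm_nonneg (T x), hm0]
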